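/- Assume the standing hypotheses (k > 2, σ > 0, P a convex n-gon with monotone error function ψ, φ_k(P) > σ, and φ_k(R) ≤ σ for every proper subpolygon R of P), and suppose in addition that n = k·m + 1 for an integer m > 1, that for every index j the diagonal (v_j, v_{j+m+1}) has a unique witness w_j — i.e. v_j ≺ w_j ≺ v_{j+m+1}, ψ(w_j, v_j, v_{j+m+1}) > σ, and ψ(x, v_j, v_{j+m+1}) ≤ σ for every other vertex x with v_j ≺ x ≺ v_{j+m+1} — and that the map j ↦ w_j is a bijection of the index set. If n > k + 1, then for every index i the following holds: letting j be the unique index with w_j = v_i, at least one of the two witnesses w_{i−m−1} and w_i satisfies v_j ≺ w ≺ v_{j+m+1}. -/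

import Mathlib

section Helpers

variable {n : ℕ} [NeZero n]

private lemma zrt (z : ZMod n) : ((z.val : ℕ) : ZMod n) = z :=
  ZMod.natCast_rightInverse z

private lemma zval_inj {a b : ZMod n} (h : a.val = b.val) : a = b := by
  rw [← zrt a, ← zrt b, h]

private lemma zaddval (x : ZMod n) {e : ℕ} (h : e < n) : (x + (e : ZMod n) - x).val = e := by
  have : x + (e : ZMod n) - x = (e : ZMod n) := by ring
  rw [this, ZMod.val_natCast, Nat.mod_eq_of_lt h]

private lemma zchain {x y z : ZMod n} {a b : ℕ} (hxy : (y - x).val = a)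
    (hyz : (z - y).val = b) (h : a + b < n) : (z - x).val = a + b := by
  have e1 : ((a : ℕ) : ZMod n) = y - x := by rw [← hxy]; exact zrt _
  have e2 : ((b : ℕ) : ZMod n) = z - y := by rw [← hyz]; exact zrt _
  have e3 : z - x = ((a + b : ℕ) : ZMod n) := by push_cast [e1, e2]; ring
  rw [e3, ZMod.val_natCast, Nat.mod_eq_of_lt h]

private lemma zchain_wrap {x y z : ZMod n} {a b : ℕ} (hxy : (y - x).val = a)
    (hyz : (z - y).val = b) (h : n ≤ a + b) : (z - x).val = a + b - n := by
  have ha : a < n := hxy ▸ ZMod.val_lt _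
  have hb : b < n := hyz ▸ ZMod.val_lt _
  have e1 : ((a : ℕ) : ZMod n) = y - x := by rw [← hxy]; exact zrt _
  have e2 : ((b : ℕ) : ZMod n) = z - y := by rw [← hyz]; exact zrt _
  have e4 : ((a + b : ℕ) : ZMod n) = ((a + b - n : ℕ) : ZMod n) := by
    have heq : a + b = (a + b - n) + n := by omega
    conv_lhs => rw [heq]
    rw [Nat.cast_add, ZMod.natCast_self, add_zero]
  have e3 : z - x = ((a + b - n : ℕ) : ZMod n) := by
    rw [← e4]; push_cast [e1, e2]; ring
  rw [e3, ZMod.val_natCast, Nat.mod_eq_of_lt (by omega)]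

private lemma zsubval {x a b : ZMod n} {α β : ℕ} (ha : (a - x).val = α)
    (hb : (b - x).val = β) (h : β ≤ α) : (a - b).val = α - β := by
  have hα : α < n := ha ▸ ZMod.val_lt _
  have e1 : ((α : ℕ) : ZMod n) = a - x := by rw [← ha]; exact zrt _
  have e2 : ((β : ℕ) : ZMod n) = b - x := by rw [← hb]; exact zrt _
  have e3 : a - b = ((α - β : ℕ) : ZMod n) := by
    rw [Nat.cast_sub h]; rw [e1, e2]; ring
  rw [e3, ZMod.val_natCast, Nat.mod_eq_of_lt (by omega)]

end Helpers



/-!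
STATEMENT 12: Assume the standing hypotheses (k > 2, σ > 0, P a convex n-gon
with monotone error function ψ, φ_k(P) > σ, and φ_k(R) ≤ σ for every proper
subpolygon R of P), and suppose in addition that n = k·m + 1 for an integer
m > 1, that for every index j the diagonal (v_j, v_{j+m+1}) has a unique witness
w_j — i.e. v_j ≺ w_j ≺ v_{j+m+1}, ψ(w_j, v_j, v_{j+m+1}) > σ, and
ψ(x, v_j, v_{j+m+1}) ≤ σ for every other vertex x with v_j ≺ x ≺ v_{j+m+1} —
and that the map j ↦ w_j is a bijection of the index set.  If n > k + 1, then
for every index i the following holds: letting j be the unique index with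
w_j = v_i, at least one of the two witnesses w_{i−m−1} and w_i satisfies
v_j ≺ w ≺ v_{j+m+1}.
-/

noncomputable section

abbrev Pt := EuclideanSpace ℝ (Fin 2)

/-- `ccw3 a b c` : the triple `(a, b, c)` is positively (counterclockwise) oriented. -/
def ccw3 (a b c : Pt) : Prop :=
  0 < (b 0 - a 0) * (c 1 - a 1) - (b 1 - a 1) * (c 0 - a 0)

/-- `CBtw i j l` : in the counterclockwise cyclic order of `ZMod n`, a traversal
starting at `i` meets `j` strictly after `i` and strictly before `l`. -/
def CBtw {n : ℕ} (i j l : ZMod n) : Prop :=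
  0 < (j - i).val ∧ (j - i).val < (l - i).val

/-- The points `v 0, v 1, …, v (n-1)` are the vertices, in counterclockwise order,
of a convex `n`-gon. -/
def ConvexCCW {n : ℕ} (v : ZMod n → Pt) : Prop :=
  ∀ i j l : ZMod n, CBtw i j l → ccw3 (v i) (v j) (v l)

/-- The approximation error `φ(W, S)` of the subpolygon with vertex index set `W`
by the subpolygon with vertex index set `S ⊆ W`, for the error function `ψ`. -/
def phiSet {n : ℕ} (ψ : ZMod n → ZMod n → ZMod n → ℝ) (W S : Finset (ZMod n)) : ℝ :=
  sSup {x | ∃ u s t : ZMod n, u ∈ W ∧ u ∉ S ∧ s ∈ S ∧ t ∈ S ∧ CBtw s u t ∧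
    (∀ y ∈ S, ¬ CBtw s y t) ∧ x = ψ u s t}

/-- `φ_k` of the subpolygon with vertex index set `W`. -/
def phiK {n : ℕ} (ψ : ZMod n → ZMod n → ZMod n → ℝ) (k : ℕ) (W : Finset (ZMod n)) : ℝ :=
  if W.card ≤ k then 0
  else sInf {x | ∃ S : Finset (ZMod n), S ⊆ W ∧ S.card = k ∧ x = phiSet ψ W S}

theorem near_witness (k n m : ℕ) [NeZero n] (hk : 2 < k) (hm : 1 < m)
    (hnm : n = k * m + 1)
    (v : ZMod n → Pt) (hconv : ConvexCCW v)
    (ψ : ZMod n → ZMod n → ZMod n → ℝ)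
    (hψ0 : ∀ u s t : ZMod n, CBtw s u t → 0 ≤ ψ u s t)
    (hψmono : ∀ u s t s' t' : ZMod n, CBtw s u t →
      (s' - s).val < (u - s).val → (u - s).val < (t' - s).val →
      (t' - s).val ≤ (t - s).val → ψ u s' t' ≤ ψ u s t)
    (σ : ℝ) (hσ : 0 < σ)
    (hP : σ < phiK ψ k Finset.univ)
    (hsub : ∀ W : Finset (ZMod n), W ⊂ Finset.univ → phiK ψ k W ≤ σ)
    (w : ZMod n → ZMod n) (hbij : Function.Bijective w)
    (hwit : ∀ j : ZMod n, CBtw j (w j) (j + (m : ZMod n) + 1) ∧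
      σ < ψ (w j) j (j + (m : ZMod n) + 1) ∧
      ∀ x : ZMod n, CBtw j x (j + (m : ZMod n) + 1) → x ≠ w j →
        ψ x j (j + (m : ZMod n) + 1) ≤ σ)
    (hbig : k + 1 < n) :
    ∀ i j : ZMod n, w j = i →
      CBtw j (w (i - ((m : ZMod n) + 1))) (j + (m : ZMod n) + 1) ∨
      CBtw j (w i) (j + (m : ZMod n) + 1) := by

  classical
  intro i j hji
  by_contra hcon
  push_neg at hcon
  obtain ⟨hu0, hu1⟩ := hcon
  have hCB : ∀ a b c : ZMod n, CBtw a b c ↔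
      (0 < (b - a).val ∧ (b - a).val < (c - a).val) := fun _ _ _ => Iff.rfl
  -- numeric basics
  have hm2 : 2 ≤ m := hm
  have hk3 : 3 ≤ k := hk
  have hm1n : m + 1 < n := by
    have h2m : 2 * m ≤ k * m := Nat.mul_le_mul_right m (by omega)
    omega
  have hMval : ∀ x : ZMod n, (x + (m : ZMod n) + 1 - x).val = m + 1 := by
    intro x
    have hx : x + (m : ZMod n) + 1 = x + ((m + 1 : ℕ) : ZMod n) := by push_cast; ring
    rw [hx]; exact zaddval x hm1n
  -- witness basic facts at j
  obtain ⟨hcbj, -, -⟩ := hwit j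
  rw [hji, hCB, hMval j] at hcbj
  obtain ⟨hd1, hd2⟩ := hcbj
  -- the removed vertex set X
  set X : Finset (ZMod n) :=
    Finset.univ.filter (fun x => 0 < (x - j).val ∧ (x - j).val < m + 1 ∧ x ≠ i) with hXdef
  have hmemX : ∀ x : ZMod n,
      x ∈ X ↔ (0 < (x - j).val ∧ (x - j).val < m + 1 ∧ x ≠ i) := by
    intro x; simp [hXdef]
  have hXcard : X.card ≤ m := by
    have h := Finset.card_le_card_of_injOn (s := X) (t := Finset.Icc 1 m)
      (fun x => (x - j).val)
      (by intro x hx; rw [Finset.mem_coe, hmemX] at hx; rw [Finset.mem_coe, Finset.mem_Icc]; exact ⟨hx.1, Nat.lt_succ_iff.mp hx.2.1⟩)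
      (by intro x _ y _ hxy; exact sub_left_inj.mp (zval_inj hxy))
    rwa [Nat.card_Icc, Nat.add_sub_cancel] at h
  have hXne : X.Nonempty := by
    have h1n : 1 < n := by omega
    have h2n : 2 < n := by omega
    have hval1 : ((j + ((1 : ℕ) : ZMod n)) - j).val = 1 := zaddval j h1n
    have hval2 : ((j + ((2 : ℕ) : ZMod n)) - j).val = 2 := zaddval j h2n
    by_cases hc : j + ((1 : ℕ) : ZMod n) = i
    · refine ⟨j + ((2 : ℕ) : ZMod n), ?_⟩
      rw [hmemX]
      refine ⟨by omega, by omega, fun hc2 => ?_⟩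
      rw [← hc] at hc2
      rw [hc2] at hval2
      omega
    · exact ⟨j + ((1 : ℕ) : ZMod n), by rw [hmemX]; exact ⟨by omega, by omega, hc⟩⟩
  have hWssub : Xᶜ ⊂ Finset.univ := by
    rw [Finset.ssubset_univ_iff]
    intro h
    obtain ⟨x, hx⟩ := hXne
    have hx2 : x ∈ Xᶜ := h ▸ Finset.mem_univ x
    exact Finset.mem_compl.mp hx2 hx
  have hWcard : k < Xᶜ.card := by
    have hc := Finset.card_compl X
    rw [ZMod.card] at hc
    have hA : 2 * (m - 1) ≤ k * (m - 1) := Nat.mul_le_mul_right _ (by omega)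
    have hB : k * m = k * (m - 1) + k := by
      conv_lhs => rw [show m = (m - 1) + 1 by omega]
      rw [Nat.mul_succ]
    omega
  -- extract a good S from hsub
  have hφ := hsub Xᶜ hWssub
  simp only [phiK] at hφ
  rw [if_neg (by omega : ¬ Xᶜ.card ≤ k)] at hφ
  obtain ⟨S₀, hS₀sub, hS₀card⟩ := Finset.exists_subset_card_eq (le_of_lt hWcard)
  have hne : {x | ∃ S : Finset (ZMod n), S ⊆ Xᶜ ∧ S.card = k ∧ x = phiSet ψ Xᶜ S}.Nonempty :=
    ⟨phiSet ψ Xᶜ S₀, S₀, hS₀sub, hS₀card, rfl⟩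
  have hfin : {x | ∃ S : Finset (ZMod n), S ⊆ Xᶜ ∧ S.card = k ∧ x = phiSet ψ Xᶜ S}.Finite := by
    apply Set.Finite.subset (Set.finite_range (fun S : Finset (ZMod n) => phiSet ψ Xᶜ S))
    rintro x ⟨S, -, -, rfl⟩
    exact ⟨S, rfl⟩
  obtain ⟨S, hSsub, hScard, hSeq⟩ := hne.csInf_mem hfin
  rw [hSeq] at hφ
  have hgood : phiSet ψ Xᶜ S ≤ σ := hφ
  -- gap structure of S
  have hSne : S.Nonempty := by
    rw [← Finset.card_pos, hScard]; omega
  have heraseS : ∀ s : ZMod n, s ∈ S → (S.erase s).Nonempty := by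
    intro s hs
    rw [← Finset.card_pos, Finset.card_erase_of_mem hs, hScard]; omega
  set nxtval : ZMod n → ℕ := fun s =>
    if h : (S.erase s).Nonempty then
      ((S.erase s).image fun y => (y - s).val).min' (h.image _)
    else 0 with hnxtdef
  have hnxt : ∀ s ∈ S, ∃ t ∈ S, t ≠ s ∧ (t - s).val = nxtval s := by
    intro s hs
    have h := heraseS s hs
    have hmem := Finset.min'_mem ((S.erase s).image fun y => (y - s).val) (h.image _)
    rw [Finset.mem_image] at hmem
    obtain ⟨t, htmem, htval⟩ := hmem
    rw [Finset.mem_erase] at htmem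
    refine ⟨t, htmem.2, htmem.1, ?_⟩
    simp only [hnxtdef, dif_pos h]
    exact htval
  have hnxt_le : ∀ s ∈ S, ∀ y ∈ S, y ≠ s → nxtval s ≤ (y - s).val := by
    intro s hs y hy hyne
    have h := heraseS s hs
    simp only [hnxtdef, dif_pos h]
    exact Finset.min'_le _ _ (Finset.mem_image_of_mem _ (Finset.mem_erase.mpr ⟨hyne, hy⟩))
  have hnxt_pos : ∀ s ∈ S, 0 < nxtval s := by
    intro s hs
    obtain ⟨t, htS, htne, htval⟩ := hnxt s hs
    rw [← htval]
    have hne0 : t - s ≠ 0 := sub_ne_zero.mpr htne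
    have := (ZMod.val_eq_zero (t - s)).not.mpr hne0
    omega
  have hnot_between : ∀ s ∈ S, ∀ y ∈ S,
      ¬ (0 < (y - s).val ∧ (y - s).val < nxtval s) := by
    intro s hs y hy hcontra
    by_cases hys : y = s
    · rw [hys, sub_self, ZMod.val_zero] at hcontra
      omega
    · have := hnxt_le s hs y hy hys
      omega
  -- pigeonhole : some gap has length ≥ m+1
  have hlong : ∃ s ∈ S, m + 1 ≤ nxtval s := by
    by_contra hno
    push_neg at hno
    have hFex : ∀ x : ZMod n, ∃ s, s ∈ S ∧ ∀ y ∈ S, (x - s).val ≤ (x - y).val := by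
      intro x
      obtain ⟨s, hs, hmin⟩ := Finset.exists_min_image S (fun y => (x - y).val) hSne
      exact ⟨s, hs, hmin⟩
    choose F hFS hFmin using hFex
    have hfib : ∀ x : ZMod n, (x - F x).val < nxtval (F x) := by
      intro x
      by_contra hgecon
      push_neg at hgecon
      obtain ⟨t, htS, htne, htval⟩ := hnxt (F x) (hFS x)
      have h1 : (x - t).val = (x - F x).val - nxtval (F x) := zsubval rfl htval hgecon
      have h2 := hFmin x t htS
      have h3 := hnxt_pos (F x) (hFS x)
      omega
    have hcount := Finset.card_eq_sum_card_fiberwise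
      (s := Finset.univ) (t := S) (f := F) (fun x _ => hFS x)
    have hbound : ∀ s ∈ S, (Finset.univ.filter fun x => F x = s).card ≤ m := by
      intro s hs
      have hmaps : ∀ x ∈ Finset.univ.filter (fun x => F x = s),
          (x - s).val ∈ Finset.range m := by
        intro x hx
        rw [Finset.mem_filter] at hx
        have h1 := hfib x
        rw [hx.2] at h1
        have h2 := hno s hs
        rw [Finset.mem_range]
        omega
      have hinj : Set.InjOn (fun x => (x - s).val)
          (Finset.univ.filter fun x => F x = s) := by
        intro x _ y _ hxy
        exact sub_left_inj.mp (zval_inj hxy)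
      have := Finset.card_le_card_of_injOn _ hmaps hinj
      simpa using this
    have hsum : ∑ s ∈ S, (Finset.univ.filter fun x => F x = s).card ≤ ∑ _s ∈ S, m :=
      Finset.sum_le_sum hbound
    rw [Finset.sum_const, smul_eq_mul, hScard] at hsum
    rw [Finset.card_univ, ZMod.card] at hcount
    omega
  obtain ⟨s₀, hs₀S, hs₀long⟩ := hlong
  obtain ⟨t₀, ht₀S, ht₀ne, ht₀val⟩ := hnxt s₀ hs₀S
  have hL₀lt : nxtval s₀ < n := by
    rw [← ht₀val]; exact ZMod.val_lt _
  -- main fact: every witness start inside the long gap maps into X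
  have hmain : ∀ e : ℕ, e + (m + 1) ≤ nxtval s₀ → w (s₀ + (e : ZMod n)) ∈ X := by
    intro e he
    by_contra hxmem
    have hj's₀ : (s₀ + (e : ZMod n) - s₀).val = e := zaddval s₀ (by omega)
    obtain ⟨hcb', hψ', -⟩ := hwit (s₀ + (e : ZMod n))
    rw [hCB, hMval _] at hcb'
    obtain ⟨hc1, hc2⟩ := hcb'
    set jp := s₀ + (e : ZMod n) with hjp
    set u := w jp with hudef
    have hus₀ : (u - s₀).val = e + (u - jp).val := zchain hj's₀ rfl (by omega)
    have hcbs : CBtw s₀ u t₀ := by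
      rw [hCB]
      exact ⟨by omega, by rw [hus₀, ht₀val]; omega⟩
    have huS : u ∉ S := by
      intro huS
      exact hnot_between s₀ hs₀S u huS ⟨by omega, by rw [hus₀]; omega⟩
    have hmm : (jp + (m : ZMod n) + 1 - s₀).val = e + (m + 1) :=
      zchain hj's₀ (hMval jp) (by omega)
    have hle : ψ u jp (jp + (m : ZMod n) + 1) ≤ ψ u s₀ t₀ := by
      apply hψmono u s₀ t₀ jp (jp + (m : ZMod n) + 1) hcbs
      · rw [hj's₀, hus₀]; omega
      · rw [hus₀, hmm]; omega
      · rw [hmm, ht₀val]; omega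
    have hbdd : BddAbove {x | ∃ u' s t : ZMod n, u' ∈ Xᶜ ∧ u' ∉ S ∧ s ∈ S ∧ t ∈ S ∧
        CBtw s u' t ∧ (∀ y ∈ S, ¬ CBtw s y t) ∧ x = ψ u' s t} := by
      apply Set.Finite.bddAbove
      apply Set.Finite.subset
        (Set.finite_range fun p : ZMod n × ZMod n × ZMod n => ψ p.1 p.2.1 p.2.2)
      rintro x ⟨u', s, t, -, -, -, -, -, -, rfl⟩
      exact ⟨(u', s, t), rfl⟩
    have hmem : ψ u s₀ t₀ ∈ {x | ∃ u' s t : ZMod n, u' ∈ Xᶜ ∧ u' ∉ S ∧ s ∈ S ∧ t ∈ S ∧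
        CBtw s u' t ∧ (∀ y ∈ S, ¬ CBtw s y t) ∧ x = ψ u' s t} := by
      refine ⟨u, s₀, t₀, Finset.mem_compl.mpr hxmem, huS, hs₀S, ht₀S, hcbs, ?_, rfl⟩
      intro y hy hcb
      rw [hCB] at hcb
      exact hnot_between s₀ hs₀S y hy ⟨hcb.1, by rw [← ht₀val]; exact hcb.2⟩
    have hle2 : ψ u s₀ t₀ ≤ phiSet ψ Xᶜ S := le_csSup hbdd hmem
    linarith
  -- apply with e = 0 : w s₀ ∈ X
  have hws₀ : w s₀ ∈ X := by
    have := hmain 0 (by omega)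
    simpa using this
  rw [hmemX] at hws₀
  obtain ⟨hw1, hw2, hw3⟩ := hws₀
  obtain ⟨hcb₀, -, -⟩ := hwit s₀
  rw [hCB, hMval s₀] at hcb₀
  obtain ⟨hc₀1, hc₀2⟩ := hcb₀
  have hqlt : (s₀ - j).val < n := ZMod.val_lt _
  by_cases hcase : (s₀ - j).val + (w s₀ - s₀).val < n
  · -- no wraparound : s₀ is j or i, both impossible
    have hwsval : (w s₀ - j).val = (s₀ - j).val + (w s₀ - s₀).val := zchain rfl rfl hcase
    have hs₀X : s₀ ∉ X := Finset.mem_compl.mp (hSsub hs₀S)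
    rw [hmemX] at hs₀X
    push_neg at hs₀X
    by_cases hq0 : 0 < (s₀ - j).val
    · have hs₀i : s₀ = i := hs₀X hq0 (by omega)
      apply hu1
      rw [hCB, hMval j, ← hs₀i]
      exact ⟨hw1, hw2⟩
    · have hq00 : (s₀ - j).val = 0 := by omega
      have hs₀j : s₀ = j := by
        have h0 : s₀ - j = 0 := (ZMod.val_eq_zero _).mp hq00
        exact sub_eq_zero.mp h0
      exact hw3 (by rw [hs₀j, hji])
  · -- wraparound : s₀ is shortly before j
    push_neg at hcase
    have hwsval : (w s₀ - j).val = (s₀ - j).val + (w s₀ - s₀).val - n :=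
      zchain_wrap rfl rfl hcase
    rw [hwsval] at hw1 hw2
    -- the gap cannot reach past j
    have hLrm : nxtval s₀ ≤ (n - (s₀ - j).val) + m := by
      by_contra hL
      push_neg at hL
      have hmr := hmain (n - (s₀ - j).val) (by omega)
      have hq : (((s₀ - j).val : ℕ) : ZMod n) = s₀ - j := zrt _
      have hcast : ((n - (s₀ - j).val : ℕ) : ZMod n) = - (s₀ - j) := by
        have h1 : ((n - (s₀ - j).val) + (s₀ - j).val : ℕ) = n := by omega
        have h2 : (((n - (s₀ - j).val) + (s₀ - j).val : ℕ) : ZMod n) = 0 := by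
          rw [h1]; exact ZMod.natCast_self n
        rw [Nat.cast_add, hq] at h2
        exact eq_neg_of_add_eq_zero_left h2
      have hs₀r : s₀ + ((n - (s₀ - j).val : ℕ) : ZMod n) = j := by
        rw [hcast]; ring
      rw [hs₀r, hji, hmemX] at hmr
      exact hmr.2.2 rfl
    -- hence t₀ lies in the window, so t₀ = i
    have hqL : n ≤ (s₀ - j).val + nxtval s₀ := by omega
    have hpt : (t₀ - j).val = (s₀ - j).val + nxtval s₀ - n := zchain_wrap rfl ht₀val hqL
    have hpt1 : 0 < (t₀ - j).val := by omega
    have hpt2 : (t₀ - j).val < m + 1 := by omega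
    have ht₀X : t₀ ∉ X := Finset.mem_compl.mp (hSsub ht₀S)
    rw [hmemX] at ht₀X
    push_neg at ht₀X
    have ht₀i : t₀ = i := ht₀X hpt1 hpt2
    -- final : the witness start i - (m+1) lies in the gap
    have hmr2 := hmain (nxtval s₀ - (m + 1)) (by omega)
    have hcomp : s₀ + ((nxtval s₀ - (m + 1) : ℕ) : ZMod n) = i - ((m : ZMod n) + 1) := by
      have hL : ((nxtval s₀ : ℕ) : ZMod n) = t₀ - s₀ := by
        rw [← ht₀val]; exact zrt _
      have hsplit : ((nxtval s₀ : ℕ) : ZMod n) =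
          ((nxtval s₀ - (m + 1) : ℕ) : ZMod n) + ((m + 1 : ℕ) : ZMod n) := by
        rw [← Nat.cast_add]
        congr 1
        omega
      have hthis : ((nxtval s₀ - (m + 1) : ℕ) : ZMod n) =
          (t₀ - s₀) - ((m + 1 : ℕ) : ZMod n) := by
        rw [← hL, hsplit]; ring
      rw [hthis, ht₀i]
      push_cast
      ring
    rw [hcomp, hmemX] at hmr2
    apply hu0
    rw [hCB, hMval j]
    exact ⟨hmr2.1, hmr2.2.1⟩
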